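/- Under Assumption 2.5 and exponential stability of the evolution family (‖U(t,s,ω)‖_{𝓛(X)} ≤ C_U e^{−λ(t−s)}, λ > 0), for every ω ∈ Ω: (i) ‖U(0,−a,ω)ω_{−a}‖_X → 0 as a → ∞; (ii) the integral ∫_{−∞}^0 U(0,r,ω)A(θ_rω)ω_r dr converges absolutely in X; consequently the limit lim_{a→∞} ( −U(0,−a,ω)ω_{−a} + ∫_{−a}^0 U(0,r,ω)A(θ_rω)ω_r dr ) exists in X and defines Z(ω). -/

import Mathlib

open MeasureTheory Filter

/-- Under Assumption 2.5 (here abstracted by the parabolic evolution family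
`U(t,s,ω)` together with the extended operators `UA t s ω = U(t,s,ω) A(θ_s ω)` and the
smoothing estimate `‖U(t,s,ω)A(θ_s ω)x‖ ≤ C̃₁ e^{-λ(t-s)}(t-s)^{-1}‖x‖`) and exponential
stability `‖U(t,s,ω)‖ ≤ C_U e^{-λ(t-s)}`, for every `ω ∈ Ω`:
(i)  `‖U(0,-a,ω) ω_{-a}‖ → 0` as `a → ∞`;
(ii) the integral `∫_{-∞}^0 U(0,r,ω)A(θ_r ω) ω_r dr` converges absolutely in `X`;
consequently the limit
`lim_{a→∞} ( -U(0,-a,ω) ω_{-a} + ∫_{-a}^0 U(0,r,ω)A(θ_r ω) ω_r dr )` exists in `X`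
(and defines `Z(ω)`). -/
theorem statement1
    {Ω : Type*} {X : Type*} [NormedAddCommGroup X] [NormedSpace ℝ X] [CompleteSpace X]
    -- the Wiener shift on the canonical set of two-sided Brownian paths
    (θ : ℝ → Ω → Ω)
    (path : Ω → ℝ → X)
    (hpath0 : ∀ ω, path ω 0 = 0)
    (hpathcont : ∀ ω, Continuous (path ω))
    (hshift : ∀ s t : ℝ, ∀ ω, path (θ s ω) t = path ω (t + s) - path ω s)
    -- sublinear growth of the paths
    (hgrowth : ∀ ω, ∀ ε : ℝ, 0 < ε → ∃ T₀ : ℝ, 0 < T₀ ∧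
      ∀ t : ℝ, T₀ ≤ |t| → ‖path ω t‖ ≤ ε * |t|)
    -- local Hölder continuity of the paths, for every exponent `γ' ∈ (0,1/2)`
    (hHolder : ∀ ω, ∀ γ' ∈ Set.Ioo (0 : ℝ) (1/2), ∀ a b : ℝ, a ≤ b →
      ∃ c : ℝ, ∀ x ∈ Set.Icc a b, ∀ y ∈ Set.Icc a b,
        ‖path ω x - path ω y‖ ≤ c * |x - y| ^ γ')
    -- the parabolic evolution family and the extended operators `U(t,s,ω) A(θ_s ω)`
    (U : ℝ → ℝ → Ω → X →L[ℝ] X)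
    (UA : ℝ → ℝ → Ω → X →L[ℝ] X)
    (hUid : ∀ t : ℝ, ∀ ω, U t t ω = ContinuousLinearMap.id ℝ X)
    (hUcomp : ∀ t s r : ℝ, r ≤ s → s ≤ t → ∀ ω,
      (U t s ω).comp (U s r ω) = U t r ω)
    (hUAcont : ∀ ω, ∀ t : ℝ, ContinuousOn (fun r : ℝ => UA t r ω (path ω r)) (Set.Iio t))
    -- exponential stability
    (C_U lam : ℝ) (hCU : 0 < C_U) (hlam : 0 < lam)
    (hstable : ∀ t s : ℝ, s ≤ t → ∀ ω, ‖U t s ω‖ ≤ C_U * Real.exp (-lam * (t - s)))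
    -- smoothing estimate for the extension of `U(t,s,ω) A(θ_s ω)` to `X`
    (C₁ : ℝ) (hC₁ : 0 < C₁)
    (hsmooth : ∀ t s : ℝ, s < t → ∀ ω, ∀ x : X,
      ‖UA t s ω x‖ ≤ C₁ * (Real.exp (-lam * (t - s)) / (t - s)) * ‖x‖)
    (ω : Ω) :
    -- (i)
    Tendsto (fun a : ℝ => ‖U 0 (-a) ω (path ω (-a))‖) atTop (nhds 0) ∧
    -- (ii) absolute convergence of the integral on `(-∞,0]`
    IntegrableOn (fun r : ℝ => UA 0 r ω (path ω r)) (Set.Iic 0) ∧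
    -- consequently the limit exists in `X` and defines `Z(ω)`
    ∃ Zω : X,
      Tendsto
        (fun a : ℝ =>
          -(U 0 (-a) ω (path ω (-a))) + ∫ r in Set.Ioc (-a) (0 : ℝ), UA 0 r ω (path ω r))
        atTop (nhds Zω) := by
  classical
  -- growth with ε = 1
  obtain ⟨T₀, hT₀pos, hT₀⟩ := hgrowth ω 1 one_pos
  -- Hölder on [-1,0] with exponent 1/4
  obtain ⟨c, hc⟩ := hHolder ω (1/4) ⟨by norm_num, by norm_num⟩ (-1) 0 (by norm_num)
  have hc0 : 0 ≤ c := by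
    have h := hc (-1) ⟨le_refl _, by norm_num⟩ 0 ⟨by norm_num, le_refl _⟩
    have h1 : |(-1 : ℝ) - 0| ^ ((1:ℝ)/4) = 1 := by
      norm_num
    rw [h1, mul_one] at h
    exact le_trans (norm_nonneg _) h
  set M : ℝ := max T₀ 1 with hM
  have hM1 : (1:ℝ) ≤ M := le_max_right _ _
  have hMT : T₀ ≤ M := le_max_left _ _
  -- bound on compact [-M, 0]
  obtain ⟨B, hB⟩ := isCompact_Icc.exists_bound_of_continuousOn
    (s := Set.Icc (-M) 0) (hpathcont ω).continuousOn
  -- Part (i)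
  have part1 : Tendsto (fun a : ℝ => ‖U 0 (-a) ω (path ω (-a))‖) atTop (nhds 0) := by
    have hg : Tendsto (fun a : ℝ => (C_U / lam) * ((lam * a) ^ (1:ℕ) * Real.exp (-(lam * a))))
        atTop (nhds 0) := by
      have h1 : Tendsto (fun a : ℝ => lam * a) atTop atTop :=
        Tendsto.const_mul_atTop hlam tendsto_id
      have h2 := (Real.tendsto_pow_mul_exp_neg_atTop_nhds_zero 1).comp h1
      simpa using h2.const_mul (C_U / lam)
    refine squeeze_zero' (Filter.Eventually.of_forall fun a => norm_nonneg _) ?_ hg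
    filter_upwards [eventually_ge_atTop M] with a ha
    have ha0 : 0 ≤ a := le_trans (le_trans zero_le_one hM1) ha
    have hna : (-a : ℝ) ≤ 0 := by linarith
    have hpa : ‖path ω (-a)‖ ≤ a := by
      have := hT₀ (-a) (by rw [abs_neg, abs_of_nonneg ha0]; linarith)
      rwa [abs_neg, abs_of_nonneg ha0, one_mul] at this
    calc ‖U 0 (-a) ω (path ω (-a))‖ ≤ ‖U 0 (-a) ω‖ * ‖path ω (-a)‖ :=
          (U 0 (-a) ω).le_opNorm _
      _ ≤ (C_U * Real.exp (-lam * (0 - (-a)))) * a := by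
          apply mul_le_mul (hstable 0 (-a) hna ω) hpa (norm_nonneg _)
          positivity
      _ = (C_U / lam) * ((lam * a) ^ (1:ℕ) * Real.exp (-(lam * a))) := by
          rw [show (-lam * (0 - (-a))) = -(lam * a) by ring]
          field_simp
  -- Part (ii)
  set f : ℝ → X := fun r => UA 0 r ω (path ω r) with hf
  have hmeas : AEStronglyMeasurable f (volume.restrict (Set.Iio (0:ℝ))) :=
    (hUAcont ω 0).aestronglyMeasurable measurableSet_Iio
  -- integrability on Iic (-1)
  have hA : IntegrableOn f (Set.Iic (-1 : ℝ)) := by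
    have hgint : IntegrableOn (fun r : ℝ => (C₁ * max B 1) * Real.exp (lam * r))
        (Set.Iic (-1 : ℝ)) := by
      have h0 : Integrable ((Set.Iic (-lam : ℝ)).indicator Real.exp) :=
        (integrableOn_exp_Iic (-lam)).integrable_indicator measurableSet_Iic
      have h1 : Integrable (fun r : ℝ => ((Set.Iic (-lam : ℝ)).indicator Real.exp) (lam * r)) :=
        h0.comp_mul_left' hlam.ne'
      have h2 : (fun r : ℝ => ((Set.Iic (-lam : ℝ)).indicator Real.exp) (lam * r))
          = (Set.Iic (-1 : ℝ)).indicator (fun r => Real.exp (lam * r)) := by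
        funext r
        by_cases hr : r ≤ -1
        · have h' : lam * r ≤ -lam := by nlinarith
          rw [Set.indicator_of_mem (Set.mem_Iic.mpr h'), Set.indicator_of_mem (Set.mem_Iic.mpr hr)]
        · push_neg at hr
          have h' : ¬ lam * r ≤ -lam := by push_neg; nlinarith
          rw [Set.indicator_of_notMem (fun hm => h' (Set.mem_Iic.mp hm)),
            Set.indicator_of_notMem (fun hm => absurd (Set.mem_Iic.mp hm) (not_le.mpr hr))]
      rw [h2] at h1
      exact ((integrable_indicator_iff measurableSet_Iic).mp h1).const_mul _
    have hsub : Set.Iic (-1:ℝ) ⊆ Set.Iio (0:ℝ) :=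
      fun x hx => lt_of_le_of_lt hx (by norm_num : (-1:ℝ) < 0)
    refine Integrable.mono' hgint (hmeas.mono_set hsub) ?_
    rw [ae_restrict_iff' measurableSet_Iic]
    refine Filter.Eventually.of_forall fun r hr => ?_
    simp only [Set.mem_Iic] at hr
    have hr0 : r < 0 := by linarith
    have hrpos : (0:ℝ) < -r := by linarith
    have hsm := hsmooth 0 r hr0 ω (path ω r)
    rw [show (0 - r : ℝ) = -r by ring, show (-lam * -r) = lam * r by ring] at hsm
    have hratio : ‖path ω r‖ / (-r) ≤ max B 1 := by
      by_cases hrM : -M ≤ r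
      · have hpB : ‖path ω r‖ ≤ B := hB r ⟨hrM, le_of_lt hr0⟩
        have : ‖path ω r‖ / (-r) ≤ ‖path ω r‖ :=
          div_le_self (norm_nonneg _) (by linarith)
        exact le_trans this (le_trans hpB (le_max_left _ _))
      · push_neg at hrM
        have hTr : T₀ ≤ |r| := by rw [abs_of_neg hr0]; linarith
        have hp := hT₀ r hTr
        rw [one_mul, abs_of_neg hr0] at hp
        exact le_trans ((div_le_one hrpos).mpr hp) (le_max_right _ _)
    calc ‖f r‖ ≤ C₁ * (Real.exp (lam * r) / (-r)) * ‖path ω r‖ := hsm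
      _ = (C₁ * Real.exp (lam * r)) * (‖path ω r‖ / (-r)) := by ring
      _ ≤ (C₁ * Real.exp (lam * r)) * max B 1 := by
          apply mul_le_mul_of_nonneg_left hratio; positivity
      _ = (C₁ * max B 1) * Real.exp (lam * r) := by ring
  -- integrability on Ioo (-1) 0
  have hBint : IntegrableOn f (Set.Ioo (-1 : ℝ) 0) := by
    have hrint : IntegrableOn (fun r : ℝ => (C₁ * c) * (-r) ^ (-(3/4) : ℝ))
        (Set.Ioo (-1 : ℝ) 0) := by
      have h0 : IntervalIntegrable (fun x : ℝ => x ^ (-(3/4) : ℝ)) volume 0 1 :=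
        intervalIntegral.intervalIntegrable_rpow' (by norm_num)
      have h1 : IntervalIntegrable (fun x : ℝ => (-x) ^ (-(3/4) : ℝ)) volume 0 (-1) := by
        simpa using (IntervalIntegrable.iff_comp_neg (f := fun x : ℝ => x ^ (-(3/4) : ℝ)) (by simp)).mp h0
      have h2 : IntegrableOn (fun x : ℝ => (-x) ^ (-(3/4) : ℝ)) (Set.Ioc (-1 : ℝ) 0) := by
        have := (intervalIntegrable_iff.mp h1.symm)
        rwa [Set.uIoc_of_le (by norm_num : (-1:ℝ) ≤ 0)] at this
      exact (h2.mono_set Set.Ioo_subset_Ioc_self).const_mul _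
    have hsub2 : Set.Ioo (-1:ℝ) 0 ⊆ Set.Iio (0:ℝ) := fun x hx => hx.2
    refine Integrable.mono' hrint (hmeas.mono_set hsub2) ?_
    rw [ae_restrict_iff' measurableSet_Ioo]
    refine Filter.Eventually.of_forall fun r hr => ?_
    obtain ⟨hr1, hr0⟩ := hr
    have hrpos : (0:ℝ) < -r := by linarith
    have hsm := hsmooth 0 r hr0 ω (path ω r)
    rw [show (0 - r : ℝ) = -r by ring, show (-lam * -r) = lam * r by ring] at hsm
    have hpath : ‖path ω r‖ ≤ c * (-r) ^ ((1:ℝ)/4) := by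
      have h := hc r ⟨le_of_lt hr1, le_of_lt hr0⟩ 0 ⟨by norm_num, le_refl _⟩
      rwa [hpath0, sub_zero, sub_zero, abs_of_neg hr0] at h
    have hexp : Real.exp (lam * r) ≤ 1 :=
      Real.exp_le_one_iff.mpr (by nlinarith)
    have key : (-r) ^ ((1:ℝ)/4) / (-r) = (-r) ^ (-(3/4) : ℝ) := by
      rw [show (-(3/4) : ℝ) = 1/4 - 1 by norm_num, Real.rpow_sub hrpos, Real.rpow_one]
    calc ‖f r‖ ≤ C₁ * (Real.exp (lam * r) / (-r)) * ‖path ω r‖ := hsm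
      _ ≤ C₁ * (1 / (-r)) * (c * (-r) ^ ((1:ℝ)/4)) := by
          have h1 : Real.exp (lam * r) / (-r) ≤ 1 / (-r) := by gcongr
          exact mul_le_mul (mul_le_mul_of_nonneg_left h1 (le_of_lt hC₁)) hpath
            (norm_nonneg _) (by positivity)
      _ = (C₁ * c) * ((-r) ^ ((1:ℝ)/4) / (-r)) := by ring
      _ = (C₁ * c) * (-r) ^ (-(3/4) : ℝ) := by rw [key]
  have part2 : IntegrableOn f (Set.Iic (0:ℝ)) := by
    rw [integrableOn_Iic_iff_integrableOn_Iio]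
    have hset : Set.Iic (-1 : ℝ) ∪ Set.Ioo (-1 : ℝ) 0 = Set.Iio (0:ℝ) :=
      Set.Iic_union_Ioo_eq_Iio (by norm_num)
    rw [← hset]
    exact hA.union hBint
  refine ⟨part1, part2, ⟨∫ r in Set.Iic (0:ℝ), f r, ?_⟩⟩
  have hneg : Tendsto (fun a : ℝ => -(U 0 (-a) ω (path ω (-a)))) atTop (nhds 0) := by
    have := (tendsto_zero_iff_norm_tendsto_zero.mpr part1).neg
    simpa using this
  have hint : Tendsto (fun a : ℝ => ∫ r in Set.Ioc (-a) (0:ℝ), f r) atTop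
      (nhds (∫ r in Set.Iic (0:ℝ), f r)) := by
    have h1 := intervalIntegral_tendsto_integral_Iic (μ := volume) (f := f) 0 part2
      tendsto_neg_atTop_atBot
    refine h1.congr' ?_
    filter_upwards [eventually_ge_atTop (0:ℝ)] with a ha
    rw [intervalIntegral.integral_of_le (by linarith : (-a:ℝ) ≤ 0)]
  simpa using hneg.add hint
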